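/- Let Θ ⊆ ℝ^K be a nonempty closed convex set, ρ > 0, Q ≥ 0, and w ∈ [0,1]. Let ḡ₁ : ℝ^K → ℝ be continuous and ρ-strongly convex, let g : ℝ^K → ℝ be Q-Lipschitz on ℝ^K, and suppose ḡ₂ := (1−w)·ḡ₁ + w·g is also ρ-strongly convex. If θ₁* is the minimizer of ḡ₁ over Θ and θ₂* is the minimizer of ḡ₂ over Θ, then ‖θ₂* − θ₁*‖₂ ≤ 2·w·Q/ρ. -/

import Mathlib

set_option maxHeartbeats 1000000

lemma combo_norm_sq {E : Type*} [NormedAddCommGroup E] [InnerProductSpace ℝ E]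
    (x y : E) (t : ℝ) :
    ‖t • x + (1 - t) • y‖ ^ 2
      = t * ‖x‖ ^ 2 + (1 - t) * ‖y‖ ^ 2 - t * (1 - t) * ‖x - y‖ ^ 2 := by
  have hx : ‖x‖ ^ 2 = (inner ℝ x x : ℝ) := (real_inner_self_eq_norm_sq x).symm
  have hy : ‖y‖ ^ 2 = (inner ℝ y y : ℝ) := (real_inner_self_eq_norm_sq y).symm
  have hxy : ‖x - y‖ ^ 2 = (inner ℝ (x - y) (x - y) : ℝ) :=
    (real_inner_self_eq_norm_sq _).symm
  have hc : ‖t • x + (1 - t) • y‖ ^ 2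
      = (inner ℝ (t • x + (1 - t) • y) (t • x + (1 - t) • y) : ℝ) :=
    (real_inner_self_eq_norm_sq _).symm
  rw [hc, hx, hy, hxy]
  simp only [inner_add_left, inner_add_right, inner_sub_left, inner_sub_right,
    real_inner_smul_left, real_inner_smul_right, real_inner_comm x y]
  ring

theorem minimizer_displacement
    {K : ℕ} (Θ : Set (EuclideanSpace ℝ (Fin K)))
    (hne : Θ.Nonempty) (hclosed : IsClosed Θ) (hconv : Convex ℝ Θ)
    (ρ Q w : ℝ) (hρ : 0 < ρ) (hQ : 0 ≤ Q) (hw0 : 0 ≤ w) (hw1 : w ≤ 1)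
    (g1 g : EuclideanSpace ℝ (Fin K) → ℝ)
    (hg1cont : Continuous g1)
    (hg1sc : ConvexOn ℝ Set.univ (fun θ => g1 θ - ρ / 2 * ‖θ‖ ^ 2))
    (hglip : ∀ x y : EuclideanSpace ℝ (Fin K), |g x - g y| ≤ Q * ‖x - y‖)
    (hg2sc : ConvexOn ℝ Set.univ
      (fun θ => ((1 - w) * g1 θ + w * g θ) - ρ / 2 * ‖θ‖ ^ 2))
    (θ1 θ2 : EuclideanSpace ℝ (Fin K)) (hθ1 : θ1 ∈ Θ) (hθ2 : θ2 ∈ Θ)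
    (hmin1 : ∀ θ ∈ Θ, g1 θ1 ≤ g1 θ)
    (hmin2 : ∀ θ ∈ Θ, (1 - w) * g1 θ2 + w * g θ2 ≤ (1 - w) * g1 θ + w * g θ) :
    ‖θ2 - θ1‖ ≤ 2 * w * Q / ρ := by
  set D : ℝ := ‖θ2 - θ1‖ with hD
  set G : EuclideanSpace ℝ (Fin K) → ℝ := fun θ => (1 - w) * g1 θ + w * g θ with hG
  -- key growth inequality: for all t ∈ (0,1), ρ/2 * (1-t) * D^2 ≤ G θ1 - G θ2
  have key : ∀ t ∈ Set.Ioo (0:ℝ) 1, ρ / 2 * ((1 - t) * D ^ 2) ≤ G θ1 - G θ2 := by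
    intro t ht
    obtain ⟨ht0, ht1⟩ := ht
    have ht0' : (0:ℝ) ≤ t := le_of_lt ht0
    have ht1' : (0:ℝ) ≤ 1 - t := by linarith
    have hmem : t • θ1 + (1 - t) • θ2 ∈ Θ := hconv hθ1 hθ2 ht0' ht1' (by ring)
    have hcv := hg2sc.2 (Set.mem_univ θ1) (Set.mem_univ θ2) ht0' ht1' (by ring : t + (1-t) = 1)
    simp only [smul_eq_mul] at hcv
    have hns := combo_norm_sq θ1 θ2 t
    have hD2 : ‖θ1 - θ2‖ = D := by rw [hD, norm_sub_rev]
    rw [hD2] at hns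
    have hmin := hmin2 _ hmem
    -- G (combo) ≤ t * G θ1 + (1-t) * G θ2 - ρ/2 * t * (1-t) * D^2
    have h1 : G (t • θ1 + (1 - t) • θ2)
        ≤ t * G θ1 + (1 - t) * G θ2 - ρ / 2 * (t * (1 - t) * D ^ 2) := by
      have := hcv
      rw [hns] at this
      simp only [hG]
      nlinarith [this]
    have h2 : G θ2 ≤ G (t • θ1 + (1 - t) • θ2) := hmin
    have h3 : G θ2 ≤ t * G θ1 + (1 - t) * G θ2 - ρ / 2 * (t * (1 - t) * D ^ 2) :=
      le_trans h2 h1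
    -- divide by t
    have h4 : ρ / 2 * (t * ((1 - t) * D ^ 2)) ≤ t * (G θ1 - G θ2) := by nlinarith
    nlinarith [h4]
  -- take t → 0⁺
  have hgrow : ρ / 2 * D ^ 2 ≤ G θ1 - G θ2 := by
    have hlim : Filter.Tendsto (fun t : ℝ => ρ / 2 * ((1 - t) * D ^ 2))
        (nhdsWithin 0 (Set.Ioi 0)) (nhds (ρ / 2 * D ^ 2)) := by
      have : Filter.Tendsto (fun t : ℝ => ρ / 2 * ((1 - t) * D ^ 2)) (nhds 0)
          (nhds (ρ / 2 * ((1 - 0) * D ^ 2))) := by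
        exact (continuous_const.mul ((continuous_const.sub continuous_id).mul
          continuous_const)).tendsto 0
      simpa using this.mono_left nhdsWithin_le_nhds
    refine le_of_tendsto hlim ?_
    filter_upwards [Ioo_mem_nhdsGT_of_mem (by norm_num : (0:ℝ) ∈ Set.Ico (0:ℝ) 1)] with t ht
    exact key t ht
  -- G θ1 - G θ2 ≤ w * Q * D
  have hub : G θ1 - G θ2 ≤ w * Q * D := by
    have hA : (1 - w) * g1 θ1 ≤ (1 - w) * g1 θ2 :=
      mul_le_mul_of_nonneg_left (hmin1 _ hθ2) (by linarith)
    have hB : g θ1 - g θ2 ≤ Q * D := by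
      have := hglip θ1 θ2
      have h12 : ‖θ1 - θ2‖ = D := by rw [hD, norm_sub_rev]
      rw [h12] at this
      exact le_trans (le_abs_self _) this
    have hB' : w * (g θ1 - g θ2) ≤ w * (Q * D) :=
      mul_le_mul_of_nonneg_left hB hw0
    simp only [hG]
    linarith
  have hfinal : ρ / 2 * D ^ 2 ≤ w * Q * D := le_trans hgrow hub
  have hDnn : 0 ≤ D := norm_nonneg _
  rcases eq_or_lt_of_le hDnn with h0 | hpos
  · rw [← h0]
    positivity
  · rw [le_div_iff₀ hρ]
    nlinarith
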